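/- Let G be a GP4-graph constructed from a connected graph H with n vertices. Every semipaired dominating set of G contains at least two vertices from {w_i, x_i, y_i, z_i} for each i ∈ {1,...,n}; consequently every semipaired dominating set of G has size at least 2n. -/

import Mathlib

open SimpleGraph Finset

/-- `D` is a dominating set of `G`. -/
def Dominating {V : Type*} (G : SimpleGraph V) (D : Finset V) : Prop :=
  ∀ v : V, ∃ u ∈ D, u = v ∨ G.Adj u v

/-- `D` is a semipaired dominating set of `G`: a dominating set whose vertices can be
partitioned into pairs (via a fixed-point-free involution) at distance at most 2. -/
def SemiPairedDom {V : Type*} (G : SimpleGraph V) (D : Finset V) : Prop :=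
  Dominating G D ∧ ∃ f : V → V,
    (∀ u ∈ D, f u ∈ D) ∧ (∀ u ∈ D, f (f u) = u) ∧ (∀ u ∈ D, f u ≠ u) ∧
    (∀ u ∈ D, G.Adj u (f u) ∨ ∃ w, G.Adj u w ∧ G.Adj w (f u))

/-- `D` is a paired dominating set of `G`: a dominating set whose induced subgraph has a
perfect matching (encoded by a fixed-point-free involution pairing adjacent vertices). -/
def PairedDom {V : Type*} (G : SimpleGraph V) (D : Finset V) : Prop :=
  Dominating G D ∧ ∃ f : V → V,
    (∀ u ∈ D, f u ∈ D) ∧ (∀ u ∈ D, f (f u) = u) ∧ (∀ u ∈ D, f u ≠ u) ∧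
    (∀ u ∈ D, G.Adj u (f u))

/-- The domination number. -/
noncomputable def domNum (V : Type*) [Fintype V] (G : SimpleGraph V) : ℕ :=
  sInf {k : ℕ | ∃ D : Finset V, Dominating G D ∧ D.card = k}

/-- The semipaired domination number. -/
noncomputable def semiPairedDomNum (V : Type*) [Fintype V] (G : SimpleGraph V) : ℕ :=
  sInf {k : ℕ | ∃ D : Finset V, SemiPairedDom G D ∧ D.card = k}

/-- The paired domination number. -/
noncomputable def pairedDomNum (V : Type*) [Fintype V] (G : SimpleGraph V) : ℕ :=
  sInf {k : ℕ | ∃ D : Finset V, PairedDom G D ∧ D.card = k}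

/-- The GP4-graph obtained from `H` by attaching to each vertex `a` a path
`a – w_a – x_a – y_a – z_a`, where `w_a, x_a, y_a, z_a` are the vertices
`Sum.inr (a, 0), …, Sum.inr (a, 3)`. -/
def GP4 {α : Type*} (H : SimpleGraph α) : SimpleGraph (α ⊕ α × Fin 4) :=
  SimpleGraph.fromRel (fun u v =>
    (∃ a b, u = Sum.inl a ∧ v = Sum.inl b ∧ H.Adj a b) ∨
    (∃ a, u = Sum.inl a ∧ v = Sum.inr (a, 0)) ∨
    (∃ (a : α) (j k : Fin 4), u = Sum.inr (a, j) ∧ v = Sum.inr (a, k) ∧ (k : ℕ) = (j : ℕ) + 1))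

lemma tail_adj {α : Type*} (H : SimpleGraph α) (a : α) (j : Fin 4) (hj : 1 ≤ (j : ℕ))
    (v : α ⊕ α × Fin 4) (h : (GP4 H).Adj (Sum.inr (a, j)) v) :
    ∃ k : Fin 4, v = Sum.inr (a, k) ∧ ((k : ℕ) + 1 = j ∨ (k : ℕ) = (j : ℕ) + 1) := by
  rw [GP4, SimpleGraph.fromRel_adj] at h
  obtain ⟨hne, h | h⟩ := h <;>
    rcases h with ⟨a', b', h1, h2, h3⟩ | ⟨a', h1, h2⟩ | ⟨a', j', k', h1, h2, h3⟩ <;>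
    simp_all


open scoped Classical in
/-- Every semipaired dominating set of the GP4-graph contains at least two
vertices from `{w_i, x_i, y_i, z_i}` for each vertex `i` of `H`; consequently it has
size at least `2n`. -/
theorem gp4_semiPairedDom_lower {α : Type*} [Fintype α] [DecidableEq α]
    (H : SimpleGraph α) (hH : H.Connected)
    (D : Finset (α ⊕ α × Fin 4)) (hD : SemiPairedDom (GP4 H) D) :
    (∀ a : α, 2 ≤ (D.filter fun v => ∃ k : Fin 4, v = Sum.inr (a, k)).card) ∧
    2 * Fintype.card α ≤ D.card := by
  obtain ⟨hdom, f, hfD, hinv, hne, hdist⟩ := hD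
  have key : ∀ a : α, 2 ≤ (D.filter fun v => ∃ k : Fin 4, v = Sum.inr (a, k)).card := by
    intro a
    -- dominate z_a = inr (a, 3)
    obtain ⟨u, huD, hu⟩ := hdom (Sum.inr (a, (3 : Fin 4)))
    -- u = inr (a, j) with 2 ≤ j
    have hu' : ∃ j : Fin 4, u = Sum.inr (a, j) ∧ 2 ≤ (j : ℕ) := by
      rcases hu with rfl | hadj
      · exact ⟨3, rfl, by decide⟩
      · obtain ⟨k, hk, hk2⟩ := tail_adj H a 3 (by decide) u hadj.symm
        exact ⟨k, hk, by omega⟩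
    obtain ⟨j, rfl, hj⟩ := hu'
    -- f u = inr (a, k) for some k
    have hfu : ∃ k : Fin 4, f (Sum.inr (a, j)) = Sum.inr (a, k) := by
      rcases hdist _ huD with hadj | ⟨w, hw1, hw2⟩
      · obtain ⟨k, hk, -⟩ := tail_adj H a j (by omega) _ hadj
        exact ⟨k, hk⟩
      · obtain ⟨kw, rfl, hkw⟩ := tail_adj H a j (by omega) _ hw1
        obtain ⟨k, hk, -⟩ := tail_adj H a kw (by omega) _ hw2
        exact ⟨k, hk⟩
    obtain ⟨k, hk⟩ := hfu
    have hsub : ({Sum.inr (a, j), Sum.inr (a, k)} : Finset (α ⊕ α × Fin 4)) ⊆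
        D.filter fun v => ∃ m : Fin 4, v = Sum.inr (a, m) := by
      intro v hv
      simp only [mem_insert, mem_singleton] at hv
      rcases hv with rfl | rfl
      · exact mem_filter.2 ⟨huD, j, rfl⟩
      · exact mem_filter.2 ⟨hk ▸ hfD _ huD, k, rfl⟩
    have hne2 : (Sum.inr (a, j) : α ⊕ α × Fin 4) ≠ Sum.inr (a, k) := by
      intro h; exact hne _ huD (hk.trans h.symm)
    calc 2 = ({Sum.inr (a, j), Sum.inr (a, k)} : Finset (α ⊕ α × Fin 4)).card := by
            rw [card_insert_of_notMem (by simpa using hne2), card_singleton]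
      _ ≤ _ := card_le_card hsub
  refine ⟨key, ?_⟩
  have hdisj : ((univ : Finset α) : Set α).PairwiseDisjoint
      (fun a => D.filter fun v => ∃ k : Fin 4, v = Sum.inr (a, k)) := by
    intro a _ b _ hab
    refine Finset.disjoint_left.2 ?_
    intro v hv1 hv2
    obtain ⟨-, k1, rfl⟩ := mem_filter.1 hv1
    obtain ⟨-, k2, hk⟩ := mem_filter.1 hv2
    simp only [Sum.inr.injEq, Prod.mk.injEq] at hk
    exact hab hk.1
  calc 2 * Fintype.card α = ∑ _a : α, 2 := by simp [mul_comm]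
    _ ≤ ∑ a : α, (D.filter fun v => ∃ k : Fin 4, v = Sum.inr (a, k)).card :=
        Finset.sum_le_sum fun a _ => key a
    _ = ((univ : Finset α).biUnion fun a =>
          D.filter fun v => ∃ k : Fin 4, v = Sum.inr (a, k)).card :=
        (Finset.card_biUnion fun a ha b hb hab => hdisj ha hb hab).symm
    _ ≤ D.card := card_le_card (Finset.biUnion_subset.2 fun a _ => filter_subset _ _)
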